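/- Let E be an exact category. An object (P•, ι•) of MMor_k(E) is a projective object of the exact category MMor_k(E) if and only if each P_i is projective in E and each structure map ι_i is a split monomorphism. -/

import Mathlib

open CategoryTheory Limits

universe v u

/-- An exact structure (in the sense of Quillen/Bühler) on an additive category `E`:
a class of kernel–cokernel pairs (`ses f g` meaning `X ↣ Y ↠ Z` is an admissible short
exact sequence), closed under isomorphism, such that admissible monomorphisms (resp.
epimorphisms) contain identities, are closed under composition, and are stable under
pushout (resp. pullback). -/
structure ExactStructure (E : Type u) [Category.{v} E] [Preadditive E] [HasZeroObject E] where
  ses : ∀ ⦃X Y Z : E⦄, (X ⟶ Y) → (Y ⟶ Z) → Prop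
  comp_zero : ∀ {X Y Z : E} {f : X ⟶ Y} {g : Y ⟶ Z}, ses f g → f ≫ g = 0
  isKernel : ∀ {X Y Z : E} {f : X ⟶ Y} {g : Y ⟶ Z} (h : ses f g),
      Nonempty (IsLimit (KernelFork.ofι f (comp_zero h)))
  isCokernel : ∀ {X Y Z : E} {f : X ⟶ Y} {g : Y ⟶ Z} (h : ses f g),
      Nonempty (IsColimit (CokernelCofork.ofπ g (comp_zero h)))
  iso_closed : ∀ {X Y Z X' Y' Z' : E} {f : X ⟶ Y} {g : Y ⟶ Z}
      (eX : X ≅ X') (eY : Y ≅ Y') (eZ : Z ≅ Z') {f' : X' ⟶ Y'} {g' : Y' ⟶ Z'},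
      f ≫ eY.hom = eX.hom ≫ f' → g ≫ eZ.hom = eY.hom ≫ g' → ses f g → ses f' g'
  id_mono : ∀ X : E, ∃ (Z : E) (g : X ⟶ Z), ses (𝟙 X) g
  id_epi : ∀ X : E, ∃ (W : E) (f : W ⟶ X), ses f (𝟙 X)
  mono_comp : ∀ {X Y Z : E} {f : X ⟶ Y} {g : Y ⟶ Z},
      (∃ (W : E) (h : Y ⟶ W), ses f h) → (∃ (W : E) (h : Z ⟶ W), ses g h) →
      ∃ (W : E) (h : Z ⟶ W), ses (f ≫ g) h
  epi_comp : ∀ {X Y Z : E} {f : X ⟶ Y} {g : Y ⟶ Z},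
      (∃ (W : E) (h : W ⟶ X), ses h f) → (∃ (W : E) (h : W ⟶ Y), ses h g) →
      ∃ (W : E) (h : W ⟶ X), ses h (f ≫ g)
  mono_pushout : ∀ {X Y Z : E} (f : X ⟶ Y) (t : X ⟶ Z),
      (∃ (W : E) (g : Y ⟶ W), ses f g) →
      ∃ (P : E) (f' : Z ⟶ P) (t' : Y ⟶ P), IsPushout t f f' t' ∧
        ∃ (W : E) (g : P ⟶ W), ses f' g
  epi_pullback : ∀ {X Y Z : E} (g : Y ⟶ X) (t : Z ⟶ X),
      (∃ (W : E) (f : W ⟶ Y), ses f g) →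
      ∃ (P : E) (g' : P ⟶ Z) (t' : P ⟶ Y), IsPullback g' t' t g ∧
        ∃ (W : E) (f : W ⟶ P), ses f g'

namespace ExactStructure

variable {E : Type u} [Category.{v} E] [Preadditive E] [HasZeroObject E]
variable (S : ExactStructure E)

/-- `f` is an admissible monomorphism. -/
def AdmMono {X Y : E} (f : X ⟶ Y) : Prop := ∃ (Z : E) (g : Y ⟶ Z), S.ses f g

/-- `g` is an admissible epimorphism. -/
def AdmEpi {Y Z : E} (g : Y ⟶ Z) : Prop := ∃ (X : E) (f : X ⟶ Y), S.ses f g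

/-- An object of `E` is injective (w.r.t. the exact structure). -/
def EInjective (I : E) : Prop :=
  ∀ ⦃X Y : E⦄ (f : X ⟶ Y), S.AdmMono f → ∀ u : X ⟶ I, ∃ v : Y ⟶ I, f ≫ v = u

/-- An object of `E` is projective (w.r.t. the exact structure). -/
def EProjective (P : E) : Prop :=
  ∀ ⦃Y Z : E⦄ (g : Y ⟶ Z), S.AdmEpi g → ∀ u : P ⟶ Z, ∃ v : P ⟶ Y, v ≫ g = u

/-- An object of the monomorphism category `MMor_k(E)`: a diagram of `k` composable
admissible monomorphisms in `E`. -/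
structure MMorObj (k : ℕ) where
  obj : Fin (k + 1) → E
  map : ∀ i : Fin k, obj i.castSucc ⟶ obj i.succ
  adm : ∀ i, S.AdmMono (map i)

/-- A morphism in the monomorphism category `MMor_k(E)`. -/
structure MMorHom {k : ℕ} (X Y : S.MMorObj k) where
  app : ∀ i, X.obj i ⟶ Y.obj i
  comm : ∀ i : Fin k, X.map i ≫ app i.succ = app i.castSucc ≫ Y.map i

variable {S}

/-- A componentwise admissible short exact sequence in `MMor_k(E)`. -/
def MMorSes {k : ℕ} {X Y Z : S.MMorObj k} (f : S.MMorHom X Y) (g : S.MMorHom Y Z) : Prop :=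
  ∀ i, S.ses (f.app i) (g.app i)

/-- Admissible monomorphisms of `MMor_k(E)`. -/
def MMorAdmMono {k : ℕ} {X Y : S.MMorObj k} (f : S.MMorHom X Y) : Prop :=
  ∃ (Z : S.MMorObj k) (g : S.MMorHom Y Z), MMorSes f g

/-- Admissible epimorphisms of `MMor_k(E)`. -/
def MMorAdmEpi {k : ℕ} {Y Z : S.MMorObj k} (g : S.MMorHom Y Z) : Prop :=
  ∃ (X : S.MMorObj k) (f : S.MMorHom X Y), MMorSes f g

/-- Injective objects of the exact category `MMor_k(E)`. -/
def MMorInjective {k : ℕ} (I : S.MMorObj k) : Prop :=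
  ∀ ⦃X Y : S.MMorObj k⦄ (f : S.MMorHom X Y), MMorAdmMono f →
    ∀ u : S.MMorHom X I, ∃ v : S.MMorHom Y I, ∀ i, f.app i ≫ v.app i = u.app i

/-- Projective objects of the exact category `MMor_k(E)`. -/
def MMorProjective {k : ℕ} (P : S.MMorObj k) : Prop :=
  ∀ ⦃Y Z : S.MMorObj k⦄ (g : S.MMorHom Y Z), MMorAdmEpi g →
    ∀ u : S.MMorHom P Z, ∃ v : S.MMorHom P Y, ∀ i, v.app i ≫ g.app i = u.app i

end ExactStructure

namespace ExactStructure

open ZeroObject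

variable {E : Type u} [Category.{v} E] [Preadditive E] [HasZeroObject E] {S : ExactStructure E}

/-- The sequence `0 ⟶ Z = Z` is admissible. -/
theorem ses_zero_id (S : ExactStructure E) (Z : E) : S.ses (0 : (0 : E) ⟶ Z) (𝟙 Z) := by
  obtain ⟨W, f, h⟩ := S.id_epi Z
  have hf0 : f = 0 := by simpa using S.comp_zero h
  -- the zero object is also a kernel of `𝟙 Z`
  have K2 : IsLimit (KernelFork.ofι (0 : (0 : E) ⟶ Z) (by simp) :
      KernelFork (𝟙 Z)) := by
    refine KernelFork.IsLimit.ofι _ _ (fun g' _ => 0) (fun g' eq' => ?_) (fun g' eq' m _ => ?_)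
    · simpa using eq'.symm
    · exact (Limits.isZero_zero E).eq_of_tgt m 0
  have e : W ≅ (0 : E) := IsLimit.conePointUniqueUpToIso (S.isKernel h).some K2
  refine S.iso_closed e (Iso.refl Z) (Iso.refl Z) ?_ ?_ h
  · simp [hf0]
  · simp

theorem admMono_zero_ini (S : ExactStructure E) (Z : E) : S.AdmMono (0 : (0 : E) ⟶ Z) :=
  ⟨Z, 𝟙 Z, S.ses_zero_id Z⟩

theorem admMono_id (S : ExactStructure E) (X : E) : S.AdmMono (𝟙 X) := S.id_mono X

/-- transfer a ses along an isomorphism on the left object -/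
theorem ses_iso_left {X' X Y Z : E} (e : X' ≅ X) {f : X ⟶ Y} {g : Y ⟶ Z}
    (h : S.ses f g) : S.ses (e.hom ≫ f) g := by
  refine S.iso_closed e.symm (Iso.refl Y) (Iso.refl Z) ?_ ?_ h <;> simp

/-- transfer a ses along an isomorphism on the middle object -/
theorem ses_iso_mid {X Y Y' Z : E} (e : Y ≅ Y') {f : X ⟶ Y} {g : Y ⟶ Z}
    (h : S.ses f g) : S.ses (f ≫ e.hom) (e.inv ≫ g) := by
  refine S.iso_closed (Iso.refl X) e (Iso.refl Z) ?_ ?_ h <;> simp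

theorem AdmMono.comp_iso {X Y Y' : E} {f : X ⟶ Y} (h : S.AdmMono f) (e : Y ≅ Y') :
    S.AdmMono (f ≫ e.hom) := by
  obtain ⟨W, g, hg⟩ := h
  exact ⟨W, e.inv ≫ g, ses_iso_mid e hg⟩

theorem AdmMono.iso_comp {X' X Y : E} {f : X ⟶ Y} (h : S.AdmMono f) (e : X' ≅ X) :
    S.AdmMono (e.hom ≫ f) := by
  obtain ⟨W, g, hg⟩ := h
  exact ⟨W, g, ses_iso_left e hg⟩

/-- any cokernel of `f` works: transfer a ses along cokernel uniqueness. -/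
theorem ses_of_isColimit {X Y Z W : E} {f : X ⟶ Y} {g : Y ⟶ Z} (h : S.ses f g)
    {g' : Y ⟶ W} (w : f ≫ g' = 0) (h2 : IsColimit (CokernelCofork.ofπ g' w)) :
    S.ses f g' := by
  have h1 := (S.isCokernel h).some
  have comm : g ≫ (IsColimit.coconePointUniqueUpToIso h1 h2).hom = g' := by
    simpa using IsColimit.comp_coconePointUniqueUpToIso_hom h1 h2 WalkingParallelPair.one
  refine S.iso_closed (Iso.refl X) (Iso.refl Y)
    (IsColimit.coconePointUniqueUpToIso h1 h2) ?_ ?_ h <;> simp [comm]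

/-- cokernel projections are epi-like: cancellation. -/
theorem ses_cancel {X Y Z W : E} {f : X ⟶ Y} {g : Y ⟶ Z} (h : S.ses f g)
    {a b : Z ⟶ W} (hab : g ≫ a = g ≫ b) : a = b :=
  Cofork.IsColimit.hom_ext (S.isCokernel h).some hab

/-- factorization through the kernel. -/
theorem ses_factor {X Y Z A : E} {f : X ⟶ Y} {g : Y ⟶ Z} (h : S.ses f g)
    (d : A ⟶ Y) (hd : d ≫ g = 0) : ∃ e : A ⟶ X, e ≫ f = d := by
  obtain ⟨l, hl⟩ := KernelFork.IsLimit.lift' (S.isKernel h).some d hd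
  exact ⟨l, hl⟩

/-- the ambient category has binary biproducts. -/
theorem hasBinaryBiproducts (S : ExactStructure E) : HasBinaryBiproducts E := by
  refine ⟨fun A B => ?_⟩
  obtain ⟨Q, f', t', hpo, -⟩ := S.mono_pushout (0 : (0 : E) ⟶ B) (0 : (0 : E) ⟶ A)
    (S.admMono_zero_ini B)
  haveI : HasBinaryCoproduct A B := by
    refine HasColimit.mk ⟨BinaryCofan.mk f' t', ?_⟩
    refine BinaryCofan.isColimitMk (fun s => hpo.desc s.inl s.inr (Limits.zero_comp.trans Limits.zero_comp.symm))
      (fun s => hpo.inl_desc _ _ _) (fun s => hpo.inr_desc _ _ _) (fun s m h1 h2 => ?_)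
    exact hpo.hom_ext (h1.trans (hpo.inl_desc _ _ _).symm) (h2.trans (hpo.inr_desc _ _ _).symm)
  exact HasBinaryBiproduct.of_hasBinaryCoproduct A B

end ExactStructure

namespace ExactStructure

open ZeroObject

variable {E : Type u} [Category.{v} E] [Preadditive E] [HasZeroObject E] {S : ExactStructure E}
variable [HasBinaryBiproducts E]

/-- The split sequence `A ⟶ A ⊞ B ⟶ B` is admissible. -/
theorem ses_inl_snd (S : ExactStructure E) [HasBinaryBiproducts E] (A B : E) :
    S.ses (biprod.inl : A ⟶ A ⊞ B) biprod.snd := by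
  obtain ⟨Q, f', t', hpo, W, g₀, hses⟩ :=
    S.mono_pushout (0 : (0 : E) ⟶ B) (0 : (0 : E) ⟶ A) (S.admMono_zero_ini B)
  have h2 : IsPushout (0 : (0 : E) ⟶ A) (0 : (0 : E) ⟶ B)
      (biprod.inl : A ⟶ A ⊞ B) biprod.inr := IsPushout.of_has_biproduct A B
  have hcomm : f' ≫ (hpo.isoIsPushout _ _ h2).hom = biprod.inl :=
    hpo.inl_isoIsPushout_hom _ _ h2
  have hses2 : S.ses (biprod.inl : A ⟶ A ⊞ B) ((hpo.isoIsPushout _ _ h2).inv ≫ g₀) := by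
    have h3 := ses_iso_mid (hpo.isoIsPushout _ _ h2) hses
    rwa [hcomm] at h3
  -- `biprod.snd` is also a cokernel of `inl`
  have hsnd : IsColimit (CokernelCofork.ofπ (biprod.snd : A ⊞ B ⟶ B)
      (by simp : (biprod.inl : A ⟶ A ⊞ B) ≫ biprod.snd = 0)) := by
    refine CokernelCofork.IsColimit.ofπ _ _ (fun g' _ => biprod.inr ≫ g')
      (fun g' hg' => ?_) (fun g' hg' m hm => ?_)
    · apply biprod.hom_ext' <;> simp [hg']
    · show m = biprod.inr ≫ g'
      rw [← hm]; simp
  exact ses_of_isColimit hses2 (by simp) hsnd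

theorem admMono_map_id_right {A B : E} {f : A ⟶ B} (hf : S.AdmMono f) (C : E) :
    S.AdmMono (biprod.map f (𝟙 C)) := by
  obtain ⟨Q, f'', t'', hpo, hadm⟩ := S.mono_pushout f (biprod.inl : A ⟶ A ⊞ C) hf
  have h2 : IsPushout (biprod.inl : A ⟶ A ⊞ C) f (biprod.map f (𝟙 C))
      (biprod.inl : B ⟶ B ⊞ C) := by
    apply IsPushout.of_isColimit (c := PushoutCocone.mk (biprod.map f (𝟙 C))
      (biprod.inl : B ⟶ B ⊞ C) (by simp))
    refine PushoutCocone.IsColimit.mk _ (fun s => biprod.desc s.inr (biprod.inr ≫ s.inl))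
      (fun s => ?_) (fun s => by simp) (fun s m h1 h2 => ?_)
    · apply biprod.hom_ext' <;> simp [s.condition]
    · apply biprod.hom_ext'
      · simpa using h2
      · have := biprod.inr ≫= h1
        simpa using this
  have hcomm : f'' ≫ (hpo.isoIsPushout _ _ h2).hom = biprod.map f (𝟙 C) :=
    hpo.inl_isoIsPushout_hom _ _ h2
  have := AdmMono.comp_iso hadm (hpo.isoIsPushout _ _ h2)
  rwa [hcomm] at this

theorem admMono_map_id_left {C D : E} {g : C ⟶ D} (hg : S.AdmMono g) (B : E) :
    S.AdmMono (biprod.map (𝟙 B) g) := by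
  obtain ⟨Q, f'', t'', hpo, hadm⟩ := S.mono_pushout g (biprod.inr : C ⟶ B ⊞ C) hg
  have h2 : IsPushout (biprod.inr : C ⟶ B ⊞ C) g (biprod.map (𝟙 B) g)
      (biprod.inr : D ⟶ B ⊞ D) := by
    apply IsPushout.of_isColimit (c := PushoutCocone.mk (biprod.map (𝟙 B) g)
      (biprod.inr : D ⟶ B ⊞ D) (by simp))
    refine PushoutCocone.IsColimit.mk _ (fun s => biprod.desc (biprod.inl ≫ s.inl) s.inr)
      (fun s => ?_) (fun s => by simp) (fun s m h1 h2 => ?_)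
    · apply biprod.hom_ext' <;> simp [s.condition]
    · apply biprod.hom_ext'
      · have := biprod.inl ≫= h1
        simpa using this
      · simpa using h2
  have hcomm : f'' ≫ (hpo.isoIsPushout _ _ h2).hom = biprod.map (𝟙 B) g :=
    hpo.inl_isoIsPushout_hom _ _ h2
  have := AdmMono.comp_iso hadm (hpo.isoIsPushout _ _ h2)
  rwa [hcomm] at this

theorem admMono_map {A B C D : E} {f : A ⟶ B} {g : C ⟶ D}
    (hf : S.AdmMono f) (hg : S.AdmMono g) : S.AdmMono (biprod.map f g) := by
  have : biprod.map f g = biprod.map f (𝟙 C) ≫ biprod.map (𝟙 B) g := by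
    apply biprod.hom_ext' <;> simp
  rw [this]
  exact S.mono_comp (admMono_map_id_right hf C) (admMono_map_id_left hg B)

theorem admMono_zero_snd_inl (S : ExactStructure E) [HasBinaryBiproducts E] (A B : E) :
    S.AdmMono ((biprod.snd : (0 : E) ⊞ A ⟶ A) ≫ (biprod.inl : A ⟶ A ⊞ B)) :=
  AdmMono.iso_comp ⟨_, biprod.snd, S.ses_inl_snd A B⟩
    (Iso.mk biprod.snd biprod.inr
      (by apply biprod.hom_ext
          · exact (Limits.isZero_zero E).eq_of_tgt _ _
          · simp)
      (by simp))

/-- The twisted split sequence is admissible. -/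
theorem ses_lift_desc (S : ExactStructure E) [HasBinaryBiproducts E] {A B : E} (c : A ⟶ B) :
    S.ses (biprod.lift (𝟙 A) (-c)) (biprod.desc c (𝟙 B)) := by
  refine S.iso_closed (Iso.refl A)
    (⟨biprod.desc (biprod.lift (𝟙 A) (-c)) biprod.inr,
      biprod.desc (biprod.lift (𝟙 A) c) biprod.inr, by ext <;> simp, by ext <;> simp⟩ :
        A ⊞ B ≅ A ⊞ B)
    (Iso.refl B) ?_ ?_ (S.ses_inl_snd A B)
  · simp
  · apply biprod.hom_ext' <;> simp

/-- Direct sum of admissible short exact sequences. -/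
theorem ses_map {X Y Z X' Y' Z' : E} {f : X ⟶ Y} {g : Y ⟶ Z} {f' : X' ⟶ Y'} {g' : Y' ⟶ Z'}
    (h : S.ses f g) (h' : S.ses f' g') :
    S.ses (biprod.map f f') (biprod.map g g') := by
  obtain ⟨W, q, hq⟩ := admMono_map (S := S) ⟨_, _, h⟩ ⟨_, _, h'⟩
  have w : biprod.map f f' ≫ biprod.map g g' = 0 := by
    apply biprod.hom_ext' <;> simp [reassoc_of% S.comp_zero h, reassoc_of% S.comp_zero h']
  haveI : Epi (biprod.map g g') := by
    refine ⟨fun {A} a b hab => ?_⟩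
    apply biprod.hom_ext'
    · refine ses_cancel h ?_
      have := biprod.inl ≫= hab
      simpa using this
    · refine ses_cancel h' ?_
      have := biprod.inr ≫= hab
      simpa using this
  refine ses_of_isColimit hq w (CokernelCofork.IsColimit.ofπ' _ w (fun {A} k hk => ?_))
  obtain ⟨d₁, hd₁⟩ := CokernelCofork.IsColimit.desc' (S.isCokernel h).some (biprod.inl ≫ k)
    (by rw [← biprod.inl_map_assoc, hk, Limits.comp_zero])
  obtain ⟨d₂, hd₂⟩ := CokernelCofork.IsColimit.desc' (S.isCokernel h').some (biprod.inr ≫ k)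
    (by rw [← biprod.inr_map_assoc, hk, Limits.comp_zero])
  have hd₁' : g ≫ d₁ = biprod.inl ≫ k := by simpa using hd₁
  have hd₂' : g' ≫ d₂ = biprod.inr ≫ k := by simpa using hd₂
  refine ⟨biprod.desc d₁ d₂, ?_⟩
  apply biprod.hom_ext' <;> simp [reassoc_of% hd₁', reassoc_of% hd₂', hd₁', hd₂']

end ExactStructure

namespace ExactStructure

open ZeroObject

variable {E : Type u} [Category.{v} E] [Preadditive E] [HasZeroObject E] {S : ExactStructure E}

/-- Drop the bottom object of a diagram. -/
def MMorObj.tail {k : ℕ} (P : S.MMorObj (k+1)) : S.MMorObj k where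
  obj i := P.obj ⟨i.1+1, by omega⟩
  map i := P.map ⟨i.1+1, by omega⟩
  adm i := P.adm ⟨i.1+1, by omega⟩

/-- Drop the bottom component of a morphism of diagrams. -/
def MMorHom.tail {k : ℕ} {X Y : S.MMorObj (k+1)} (u : S.MMorHom X Y) :
    S.MMorHom X.tail Y.tail where
  app i := u.app ⟨i.1+1, by omega⟩
  comm i := u.comm ⟨i.1+1, by omega⟩

/-- Extend a diagram downwards by duplicating the bottom object. -/
def MMorObj.ext0 {k : ℕ} (Y : S.MMorObj k) : S.MMorObj (k+1) where
  obj i := match i with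
    | ⟨0, _⟩ => Y.obj ⟨0, Nat.succ_pos k⟩
    | ⟨n+1, h⟩ => Y.obj ⟨n, by omega⟩
  map i := match i with
    | ⟨0, _⟩ => 𝟙 (Y.obj ⟨0, Nat.succ_pos k⟩)
    | ⟨n+1, h⟩ => Y.map ⟨n, by omega⟩
  adm i := match i with
    | ⟨0, _⟩ => S.id_mono _
    | ⟨n+1, h⟩ => Y.adm ⟨n, by omega⟩

/-- Extend a morphism of diagrams downwards. -/
def MMorHom.ext0h {k : ℕ} {Y Z : S.MMorObj k} (g : S.MMorHom Y Z) :
    S.MMorHom Y.ext0 Z.ext0 where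
  app i := match i with
    | ⟨0, _⟩ => g.app ⟨0, Nat.succ_pos k⟩
    | ⟨n+1, h⟩ => g.app ⟨n, by omega⟩
  comm i := match i with
    | ⟨0, _⟩ => by
        show 𝟙 (Y.obj ⟨0, Nat.succ_pos k⟩) ≫ g.app ⟨0, Nat.succ_pos k⟩ =
          g.app ⟨0, Nat.succ_pos k⟩ ≫ 𝟙 _
        simp
    | ⟨n+1, h⟩ => g.comm ⟨n, by omega⟩

/-- Extend a morphism from `P.tail` downwards to one from `P`. -/
def MMorHom.ext0u {k : ℕ} {P : S.MMorObj (k+1)} {Z : S.MMorObj k}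
    (u : S.MMorHom P.tail Z) : S.MMorHom P Z.ext0 where
  app i := match i with
    | ⟨0, _⟩ => P.map ⟨0, Nat.succ_pos k⟩ ≫ u.app ⟨0, Nat.succ_pos k⟩
    | ⟨n+1, h⟩ => u.app ⟨n, by omega⟩
  comm i := match i with
    | ⟨0, _⟩ => by
        show P.map ⟨0, Nat.succ_pos k⟩ ≫ u.app ⟨0, Nat.succ_pos k⟩ =
          (P.map ⟨0, Nat.succ_pos k⟩ ≫ u.app ⟨0, Nat.succ_pos k⟩) ≫ 𝟙 _
        simp
    | ⟨n+1, h⟩ => u.comm ⟨n, by omega⟩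

/-- A projective diagram has projective tail. -/
theorem MMorProjective.tail {k : ℕ} {P : S.MMorObj (k+1)} (h : MMorProjective P) :
    MMorProjective P.tail := by
  intro Y Z g hg u
  obtain ⟨X, f, hses⟩ := hg
  obtain ⟨v', hv'⟩ := h (Y := Y.ext0) (Z := Z.ext0) (MMorHom.ext0h g)
    ⟨X.ext0, MMorHom.ext0h f, fun i => match i with
      | ⟨0, h0⟩ => hses ⟨0, Nat.succ_pos k⟩
      | ⟨n+1, h0⟩ => hses ⟨n, by omega⟩⟩
    (MMorHom.ext0u u)
  refine ⟨⟨fun i => v'.app ⟨i.1+1, by omega⟩, fun i => v'.comm ⟨i.1+1, by omega⟩⟩, ?_⟩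
  intro i
  exact hv' ⟨i.1+1, by omega⟩

end ExactStructure

namespace ExactStructure

open ZeroObject

variable {E : Type u} [Category.{v} E] [Preadditive E] [HasZeroObject E] {S : ExactStructure E}

/-- The identity morphism of a diagram. -/
def MMorHom.id {k : ℕ} (P : S.MMorObj k) : S.MMorHom P P where
  app i := 𝟙 _
  comm i := by simp

/-- The composite `P₀ ⟶ Pₙ` of the structure maps. -/
def chainUp {k : ℕ} (P : S.MMorObj k) :
    ∀ (n : ℕ) (h : n < k + 1), P.obj ⟨0, Nat.succ_pos k⟩ ⟶ P.obj ⟨n, h⟩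
  | 0, _ => 𝟙 _
  | n+1, h => chainUp P n (by omega) ≫ P.map ⟨n, by omega⟩

/-- The auxiliary kernel-objects for the splitting construction. -/
noncomputable def bX {k : ℕ} (P : S.MMorObj k) : ℕ → E
  | 0 => 0
  | _+1 => P.obj ⟨0, Nat.succ_pos k⟩

/-- The auxiliary comparison morphisms for the splitting construction. -/
noncomputable def bGamma {k : ℕ} (P : S.MMorObj k) :
    ∀ (n : ℕ) (h : n < k + 1), bX P n ⟶ P.obj ⟨n, h⟩
  | 0, _ => 0
  | n+1, h => chainUp P (n+1) h

/-- The bottom structure map of a projective diagram is split. -/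
theorem split_bottom [HasBinaryBiproducts E] {k : ℕ} {P : S.MMorObj (k+1)}
    (hP : MMorProjective P) :
    ∃ r : P.obj ⟨1, by omega⟩ ⟶ P.obj ⟨0, by omega⟩,
      P.map ⟨0, by omega⟩ ≫ r = 𝟙 (P.obj ⟨0, by omega⟩) := by
  -- the test diagrams
  obtain ⟨v, hv⟩ := hP (Y := { obj := fun i => bX P i.1 ⊞ P.obj i
                               map := fun i => match i with
                                 | ⟨0, h⟩ => biprod.snd ≫ biprod.inl
                                 | ⟨n+1, h⟩ => biprod.map (𝟙 _) (P.map ⟨n+1, h⟩)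
                               adm := fun i => match i with
                                 | ⟨0, h⟩ => S.admMono_zero_snd_inl _ _
                                 | ⟨n+1, h⟩ => admMono_map (S.id_mono _) (P.adm _) })
    (Z := P)
    ({ app := fun i => biprod.desc (bGamma P i.1 i.2) (𝟙 _)
       comm := fun i => match i with
         | ⟨0, h⟩ => by
             show (biprod.snd ≫ biprod.inl) ≫
                 biprod.desc ((𝟙 _) ≫ P.map ⟨0, by omega⟩) (𝟙 _) =
               biprod.desc 0 (𝟙 _) ≫ P.map ⟨0, h⟩
             apply biprod.hom_ext' <;> simp [-Fin.mk_zero, -Fin.zero_eta, -Fin.mk_one, -Fin.mk_zero']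
         | ⟨n+1, h⟩ => by
             show (biprod.map (𝟙 _) (P.map ⟨n+1, h⟩)) ≫
                 biprod.desc (chainUp P (n+1) (by omega) ≫ P.map ⟨n+1, by omega⟩) (𝟙 _) =
               biprod.desc (chainUp P (n+1) (by omega)) (𝟙 _) ≫ P.map ⟨n+1, h⟩
             apply biprod.hom_ext' <;> simp [-Fin.mk_zero, -Fin.zero_eta, -Fin.mk_one, -Fin.mk_zero'] })
    ⟨{ obj := fun i => bX P i.1
       map := fun i => match i with
         | ⟨0, h⟩ => 0
         | ⟨n+1, h⟩ => 𝟙 _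
       adm := fun i => match i with
         | ⟨0, h⟩ => S.admMono_zero_ini _
         | ⟨n+1, h⟩ => S.id_mono _ },
      { app := fun i => biprod.lift (𝟙 (bX P i.1)) (-(bGamma P i.1 i.2))
        comm := fun i => match i with
          | ⟨0, h⟩ => (Limits.isZero_zero E).eq_of_src _ _
          | ⟨n+1, h⟩ => by
              show 𝟙 _ ≫ biprod.lift (𝟙 _)
                  (-(chainUp P (n+1) (by omega) ≫ P.map ⟨n+1, by omega⟩)) =
                biprod.lift (𝟙 _) (-(chainUp P (n+1) (by omega))) ≫
                  biprod.map (𝟙 _) (P.map ⟨n+1, h⟩)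
              apply biprod.hom_ext <;> simp [-Fin.mk_zero, -Fin.zero_eta, -Fin.mk_one, -Fin.mk_zero'] },
      fun i => S.ses_lift_desc _⟩
    (MMorHom.id P)
  refine ⟨v.app ⟨1, by omega⟩ ≫ biprod.fst, ?_⟩
  have c0' : P.map ⟨0, by omega⟩ ≫ v.app ⟨1, by omega⟩ =
      v.app ⟨0, by omega⟩ ≫ (biprod.snd ≫ biprod.inl) := v.comm ⟨0, by omega⟩
  have hdesc : biprod.desc (bGamma P 0 (by omega)) (𝟙 (P.obj ⟨0, by omega⟩)) =
      (biprod.snd : bX P 0 ⊞ P.obj ⟨0, by omega⟩ ⟶ _) := by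
    apply biprod.hom_ext' <;> simp [bGamma, -Fin.mk_zero, -Fin.zero_eta, -Fin.mk_one, -Fin.mk_zero']
  have hv0' : v.app ⟨0, by omega⟩ ≫ biprod.desc (bGamma P 0 (by omega))
      (𝟙 (P.obj ⟨0, by omega⟩)) = 𝟙 _ := hv ⟨0, by omega⟩
  rw [hdesc] at hv0'
  refine (Category.assoc _ _ _).symm.trans ((c0' =≫ biprod.fst).trans ((Category.assoc _ _ _).trans ((v.app ⟨0, by omega⟩ ≫= Category.assoc _ _ _).trans ?_)))
  show v.app ⟨0, by omega⟩ ≫ biprod.snd ≫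
      (biprod.inl : P.obj ⟨0, by omega⟩ ⟶ P.obj ⟨0, by omega⟩ ⊞ P.obj ⟨1, by omega⟩) ≫
      biprod.fst = 𝟙 _
  simp only [biprod.inl_fst, Category.comp_id]
  exact hv0'

end ExactStructure

namespace ExactStructure

open ZeroObject

variable {E : Type u} [Category.{v} E] [Preadditive E] [HasZeroObject E] {S : ExactStructure E}

/-- Composites of retractions down to the bottom object. -/
def rho {k : ℕ} (P : S.MMorObj k) (r : ∀ i : Fin k, P.obj i.succ ⟶ P.obj i.castSucc) :
    ∀ (n : ℕ) (h : n < k + 1), P.obj ⟨n, h⟩ ⟶ P.obj ⟨0, Nat.succ_pos k⟩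
  | 0, _ => 𝟙 _
  | n+1, h => r ⟨n, by omega⟩ ≫ rho P r n (by omega)

/-- If a diagram is projective and all its structure maps are split, then the bottom
object is projective. -/
theorem bottom_projective {k : ℕ} {P : S.MMorObj k} (hP : MMorProjective P)
    (hsplit : ∀ i : Fin k, ∃ r : P.obj i.succ ⟶ P.obj i.castSucc,
      P.map i ≫ r = 𝟙 (P.obj i.castSucc)) :
    S.EProjective (P.obj ⟨0, Nat.succ_pos k⟩) := by
  haveI := S.hasBinaryBiproducts
  intro Y Z g hg u
  obtain ⟨X, f, hfg⟩ := hg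
  choose r hr using hsplit
  obtain ⟨v, hv⟩ := hP (Y := { obj := fun i => Y ⊞ P.obj i
                               map := fun i => biprod.map (𝟙 Y) (P.map i)
                               adm := fun i => admMono_map (S.id_mono Y) (P.adm i) })
    (Z := { obj := fun i => Z ⊞ P.obj i
            map := fun i => biprod.map (𝟙 Z) (P.map i)
            adm := fun i => admMono_map (S.id_mono Z) (P.adm i) })
    ({ app := fun i => biprod.map g (𝟙 (P.obj i))
       comm := fun i => by apply biprod.hom_ext' <;> simp })
    ⟨{ obj := fun i => X ⊞ (0 : E)
       map := fun i => biprod.map (𝟙 X) (𝟙 (0 : E))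
       adm := fun i => by
         have hid : biprod.map (𝟙 X) (𝟙 (0 : E)) = 𝟙 (X ⊞ (0 : E)) := by
           apply biprod.hom_ext'
           · simp
           · exact (Limits.isZero_zero E).eq_of_src _ _
         rw [hid]; exact S.id_mono _ },
      { app := fun i => biprod.map f (0 : (0 : E) ⟶ P.obj i)
        comm := fun i => by
          apply biprod.hom_ext'
          · simp
          · exact (Limits.isZero_zero E).eq_of_src _ _ },
      fun i => ses_map hfg (S.ses_zero_id (P.obj i))⟩
    ({ app := fun i => biprod.lift (rho P r i.1 i.2 ≫ u) (𝟙 (P.obj i))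
       comm := fun i => by
         have key : P.map i ≫ rho P r (i.1+1) (by omega) = rho P r i.1 (by omega) := by
           show P.map i ≫ r ⟨i.1, i.2⟩ ≫ rho P r i.1 (by omega) = rho P r i.1 (by omega)
           rw [← Category.assoc, hr i, Category.id_comp]
         apply biprod.hom_ext
         · simp only [Category.assoc, biprod.lift_fst, biprod.map_fst, Category.comp_id]
           rw [← Category.assoc]
           rw [show P.map i ≫ rho P r (↑i.succ) i.succ.2 = rho P r i.1 (by omega) from key]
           rfl
         · simp })
  refine ⟨v.app ⟨0, by omega⟩ ≫ biprod.fst, ?_⟩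
  have hv0 : v.app ⟨0, by omega⟩ ≫ biprod.map g (𝟙 (P.obj ⟨0, by omega⟩)) =
      biprod.lift (rho P r 0 (by omega) ≫ u) (𝟙 (P.obj ⟨0, by omega⟩)) := hv ⟨0, by omega⟩
  rw [Category.assoc, ← biprod.map_fst, ← Category.assoc, hv0]
  simp [rho, -Fin.mk_zero, -Fin.zero_eta, -Fin.mk_one, -Fin.mk_zero']

/-- All structure maps of a projective diagram are split. -/
theorem splits_of_proj : ∀ {k : ℕ} (P : S.MMorObj k), MMorProjective P →
    ∀ i : Fin k, ∃ r : P.obj i.succ ⟶ P.obj i.castSucc,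
      P.map i ≫ r = 𝟙 (P.obj i.castSucc) := by
  intro k
  induction k with
  | zero => intro P _ i; exact i.elim0
  | succ k ih =>
    intro P hP i
    haveI := S.hasBinaryBiproducts
    obtain ⟨iv, hi⟩ := i
    cases iv with
    | zero => exact split_bottom hP
    | succ n => exact ih P.tail (MMorProjective.tail hP) ⟨n, by omega⟩

/-- All objects of a projective diagram are projective. -/
theorem proj_of_proj : ∀ {k : ℕ} (P : S.MMorObj k), MMorProjective P →
    ∀ i, S.EProjective (P.obj i) := by
  intro k
  induction k with
  | zero =>
    intro P hP i
    obtain ⟨iv, hi⟩ := i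
    cases iv with
    | zero => exact bottom_projective hP (fun j => j.elim0)
    | succ n => exact absurd hi (by omega)
  | succ k ih =>
    intro P hP i
    obtain ⟨iv, hi⟩ := i
    cases iv with
    | zero => exact bottom_projective hP (splits_of_proj P hP)
    | succ n => exact ih P.tail (MMorProjective.tail hP) ⟨n, by omega⟩

end ExactStructure

namespace ExactStructure

open ZeroObject

variable {E : Type u} [Category.{v} E] [Preadditive E] [HasZeroObject E] {S : ExactStructure E}

/-- The inductive lifting lemma for the converse direction: a lift at the bottom can be
extended to a lift of diagrams. -/
theorem lift_exists : ∀ {k : ℕ} (P X Y Z : S.MMorObj k) (f : S.MMorHom X Y)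
    (g : S.MMorHom Y Z) (_ : MMorSes f g)
    (_ : ∀ i, S.EProjective (P.obj i))
    (_ : ∀ i : Fin k, ∃ r : P.obj i.succ ⟶ P.obj i.castSucc,
      P.map i ≫ r = 𝟙 (P.obj i.castSucc))
    (u : S.MMorHom P Z) (v₀ : P.obj ⟨0, Nat.succ_pos k⟩ ⟶ Y.obj ⟨0, Nat.succ_pos k⟩)
    (_ : v₀ ≫ g.app ⟨0, Nat.succ_pos k⟩ = u.app ⟨0, Nat.succ_pos k⟩),
    ∃ v : S.MMorHom P Y, v.app ⟨0, Nat.succ_pos k⟩ = v₀ ∧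
      ∀ i, v.app i ≫ g.app i = u.app i := by
  intro k
  induction k with
  | zero =>
    intro P X Y Z f g hses hproj hsplit u v₀ hv₀
    refine ⟨⟨fun i => match i with
        | ⟨0, _⟩ => v₀
        | ⟨n+1, h⟩ => absurd h (by omega), fun i => i.elim0⟩, rfl, fun i => ?_⟩
    obtain ⟨iv, hi⟩ := i
    cases iv with
    | zero => exact hv₀
    | succ n => exact absurd hi (by omega)
  | succ k ih =>
    intro P X Y Z f g hses hproj hsplit u v₀ hv₀
    have hb0 : 0 < k + 2 := Nat.succ_pos _
    have hb1 : 1 < k + 2 := Nat.succ_lt_succ (Nat.succ_pos _)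
    have hbm : 0 < k + 1 := Nat.succ_pos _
    obtain ⟨w, hw⟩ := hproj ⟨1, hb1⟩ (g.app ⟨1, hb1⟩)
      ⟨X.obj ⟨1, hb1⟩, f.app ⟨1, hb1⟩, hses ⟨1, hb1⟩⟩ (u.app ⟨1, hb1⟩)
    have hgc : Y.map ⟨0, hbm⟩ ≫ g.app ⟨1, hb1⟩ =
        g.app ⟨0, hb0⟩ ≫ Z.map ⟨0, hbm⟩ := g.comm ⟨0, hbm⟩
    have huc : P.map ⟨0, hbm⟩ ≫ u.app ⟨1, hb1⟩ =
        u.app ⟨0, hb0⟩ ≫ Z.map ⟨0, hbm⟩ := u.comm ⟨0, hbm⟩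
    have e1 : v₀ ≫ Y.map ⟨0, hbm⟩ ≫ g.app ⟨1, hb1⟩ =
        P.map ⟨0, hbm⟩ ≫ u.app ⟨1, hb1⟩ := by
      rw [hgc, ← Category.assoc, hv₀, ← huc]
    have hδ : ((v₀ ≫ Y.map ⟨0, hbm⟩ :
          P.obj ⟨0, hb0⟩ ⟶ Y.obj ⟨1, hb1⟩) - (P.map ⟨0, hbm⟩ ≫ w :
          P.obj ⟨0, hb0⟩ ⟶ Y.obj ⟨1, hb1⟩)) ≫
        g.app ⟨1, hb1⟩ = 0 := by
      simp only [Preadditive.sub_comp, Category.assoc, e1, hw, sub_self]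
    obtain ⟨e, he⟩ := ses_factor (hses ⟨1, hb1⟩) _ hδ
    obtain ⟨r0, hr0⟩ : ∃ r : P.obj ⟨1, hb1⟩ ⟶ P.obj ⟨0, hb0⟩,
        P.map ⟨0, hbm⟩ ≫ r = 𝟙 (P.obj ⟨0, hb0⟩) := hsplit ⟨0, hbm⟩
    have hv₁g : (w + r0 ≫ e ≫ f.app ⟨1, hb1⟩) ≫ g.app ⟨1, hb1⟩ =
        u.app ⟨1, hb1⟩ := by
      simp only [Preadditive.add_comp, Category.assoc, hw,
        S.comp_zero (hses ⟨1, hb1⟩), Limits.comp_zero, add_zero]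
    have hcomm0 : P.map ⟨0, hbm⟩ ≫ (w + r0 ≫ e ≫ f.app ⟨1, hb1⟩) =
        v₀ ≫ Y.map ⟨0, hbm⟩ := by
      rw [Preadditive.comp_add,
        show P.map ⟨0, hbm⟩ ≫ r0 ≫ e ≫ f.app ⟨1, hb1⟩ =
          e ≫ f.app ⟨1, hb1⟩ from by rw [← Category.assoc, hr0]; exact Category.id_comp _,
        he]
      abel
    obtain ⟨vt, hvt0, hvtg⟩ := ih P.tail X.tail Y.tail Z.tail (MMorHom.tail f)
      (MMorHom.tail g) (fun i => hses ⟨i.1+1, by omega⟩) (fun i => hproj ⟨i.1+1, by omega⟩)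
      (fun i => hsplit ⟨i.1+1, by omega⟩) (MMorHom.tail u)
      (w + r0 ≫ e ≫ f.app ⟨1, hb1⟩) hv₁g
    refine ⟨⟨fun i => match i with
        | ⟨0, _⟩ => v₀
        | ⟨n+1, h⟩ => vt.app ⟨n, by omega⟩, fun i => ?_⟩, rfl, fun i => ?_⟩
    · obtain ⟨iv, hi⟩ := i
      cases iv with
      | zero =>
        show P.map ⟨0, hi⟩ ≫ vt.app ⟨0, by omega⟩ = v₀ ≫ Y.map ⟨0, hi⟩
        rw [hvt0]
        exact hcomm0
      | succ n => exact vt.comm ⟨n, by omega⟩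
    · obtain ⟨iv, hi⟩ := i
      cases iv with
      | zero => exact hv₀
      | succ n => exact hvtg ⟨n, by omega⟩

end ExactStructure

/-- Let `E` be an exact category.  An object `(P•, ι•)` of `MMor_k(E)` is
projective in the exact category `MMor_k(E)` if and only if each `P i` is projective in
`E` and each structure map `ι i` is a split monomorphism. -/
theorem mmor_projective_iff
    {E : Type u} [Category.{v} E] [Preadditive E] [HasZeroObject E]
    (S : ExactStructure E) (k : ℕ) (P : S.MMorObj k) :
    ExactStructure.MMorProjective P ↔
      ((∀ i, S.EProjective (P.obj i)) ∧
        ∀ i : Fin k, ∃ r : P.obj i.succ ⟶ P.obj i.castSucc, P.map i ≫ r = 𝟙 (P.obj i.castSucc)) := by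
  constructor
  · intro h
    exact ⟨ExactStructure.proj_of_proj P h, ExactStructure.splits_of_proj P h⟩
  · rintro ⟨h1, h2⟩
    intro Y Z g hg u
    obtain ⟨X, f, hses⟩ := hg
    obtain ⟨v₀, hv₀⟩ := h1 ⟨0, Nat.succ_pos k⟩ (g.app ⟨0, Nat.succ_pos k⟩)
      ⟨X.obj ⟨0, Nat.succ_pos k⟩, f.app ⟨0, Nat.succ_pos k⟩, hses ⟨0, Nat.succ_pos k⟩⟩
      (u.app ⟨0, Nat.succ_pos k⟩)
    obtain ⟨v, -, hv⟩ := ExactStructure.lift_exists P X Y Z f g hses h1 h2 u v₀ hv₀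
    exact ⟨v, hv⟩
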